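/- Let L be a totally real number field of degree n and u a unit of its ring of integers with u ≠ ±1. Then the sum over all real embeddings v of L of (log|v(u)|)² is at least n·(log((1+√5)/2))². -/

import Mathlib

open NumberField Real

noncomputable def cP : ℝ := Real.log ((1 + Real.sqrt 5) / 2)
noncomputable def kP : ℝ := Real.sqrt 5 / (2 * cP)

lemma sqrt5_ge_two : (2:ℝ) ≤ Real.sqrt 5 := by
  have : (2:ℝ) = Real.sqrt 4 := by
    rw [show (4:ℝ) = 2^2 by norm_num, Real.sqrt_sq (by norm_num)]
  rw [this]; exact Real.sqrt_le_sqrt (by norm_num)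

lemma phi_gt_one : 1 < (1 + Real.sqrt 5)/2 := by nlinarith [sqrt5_ge_two]

lemma cP_pos : 0 < cP := Real.log_pos phi_gt_one

lemma exp_cP : Real.exp cP = (1 + Real.sqrt 5)/2 := Real.exp_log (by linarith [phi_gt_one])

lemma exp_neg_cP : Real.exp (-cP) = (Real.sqrt 5 - 1)/2 := by
  have h5 : Real.sqrt 5 ^ 2 = 5 := Real.sq_sqrt (by norm_num)
  have hmul : ((1 + Real.sqrt 5)/2) * ((Real.sqrt 5 - 1)/2) = 1 := by nlinarith [h5]
  rw [Real.exp_neg, exp_cP]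
  exact inv_eq_of_mul_eq_one_right hmul

lemma kP_cP : kP * cP = Real.sqrt 5 / 2 := by
  have h := cP_pos.ne'
  rw [kP]; field_simp

lemma cP_lt_sqrt5 : cP < Real.sqrt 5 := by
  have h1 := Real.log_le_sub_one_of_pos (show (0:ℝ) < (1 + Real.sqrt 5)/2 by linarith [phi_gt_one])
  have h2 : (0:ℝ) ≤ Real.sqrt 5 := Real.sqrt_nonneg 5
  calc cP ≤ (1 + Real.sqrt 5)/2 - 1 := h1
    _ < Real.sqrt 5 := by linarith

lemma kP_gt_half : 1/2 < kP := by
  rw [kP, lt_div_iff₀ (by have := cP_pos; positivity)]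
  nlinarith [cP_lt_sqrt5, cP_pos]

lemma kP_pos : 0 < kP := lt_trans (by norm_num) kP_gt_half

noncomputable def hF : ℝ → ℝ := fun s => kP * s * (Real.exp s - Real.exp (-s)) - (Real.exp s + Real.exp (-s))/2

lemma hF_deriv (s : ℝ) : HasDerivAt hF
    ((kP - 1/2) * (Real.exp s - Real.exp (-s)) + kP * s * (Real.exp s + Real.exp (-s))) s := by
  have h1 : HasDerivAt (fun s : ℝ => Real.exp s) (Real.exp s) s := Real.hasDerivAt_exp s
  have h2 : HasDerivAt (fun s : ℝ => Real.exp (-s)) (-Real.exp (-s)) s := by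
    simpa using (hasDerivAt_neg s).exp
  have h3 : HasDerivAt (fun s : ℝ => kP * s) kP s := by
    simpa using (hasDerivAt_id s).const_mul kP
  have := (h3.mul (h1.sub h2)).sub ((h1.add h2).div_const 2)
  exact this.congr_deriv (by simp only [Pi.sub_apply]; ring)

lemma exp_sub_pos {s : ℝ} (hs : 0 < s) : 0 < Real.exp s - Real.exp (-s) :=
  sub_pos.mpr (Real.exp_lt_exp.mpr (by linarith))

lemma hF_strictMono : StrictMonoOn hF (Set.Ici 0) := by
  apply strictMonoOn_of_deriv_pos (convex_Ici 0)
    (Differentiable.continuous (fun s => (hF_deriv s).differentiableAt)).continuousOn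
  intro s hs
  rw [interior_Ici] at hs
  rw [(hF_deriv s).deriv]
  have e1 := exp_sub_pos hs
  have e2 : 0 < Real.exp s + Real.exp (-s) := by positivity
  have hk := kP_gt_half
  have hs' : (0:ℝ) < s := hs
  have p1 := mul_pos (mul_pos kP_pos hs') e2
  have p2 := mul_pos (show (0:ℝ) < kP - 1/2 by linarith) e1
  linarith

lemma hF_cP : hF cP = 0 := by
  rw [hF, exp_cP, exp_neg_cP]
  have := kP_cP
  linear_combination this

noncomputable def gF : ℝ → ℝ := fun s => kP * s^2 - Real.log (Real.exp s - Real.exp (-s))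

lemma gF_deriv {s : ℝ} (hs : 0 < s) :
    HasDerivAt gF (2 * hF s / (Real.exp s - Real.exp (-s))) s := by
  have h1 : HasDerivAt (fun s : ℝ => Real.exp s) (Real.exp s) s := Real.hasDerivAt_exp s
  have h2 : HasDerivAt (fun s : ℝ => Real.exp (-s)) (-Real.exp (-s)) s := by
    simpa using (hasDerivAt_neg s).exp
  have hpos := exp_sub_pos hs
  have h3 : HasDerivAt (fun s : ℝ => Real.log (Real.exp s - Real.exp (-s)))
      ((Real.exp s - -Real.exp (-s)) / (Real.exp s - Real.exp (-s))) s :=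
    (h1.sub h2).log hpos.ne'
  have h4 : HasDerivAt (fun s : ℝ => kP * s^2) (kP * (2*s)) s := by
    simpa using (hasDerivAt_pow 2 s).const_mul kP
  have := h4.sub h3
  refine this.congr_deriv ?_
  rw [hF]
  field_simp
  ring

lemma gF_min {t : ℝ} (ht : 0 < t) : kP * cP^2 ≤ gF t := by
  have hgcP : gF cP = kP * cP^2 := by
    have hone : Real.exp cP - Real.exp (-cP) = 1 := by rw [exp_cP, exp_neg_cP]; ring
    rw [gF, hone, Real.log_one, sub_zero]
  rcases lt_trichotomy t cP with h | h | h
  · -- g antitone on [t, cP]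
    have : StrictAntiOn gF (Set.Icc t cP) := by
      apply strictAntiOn_of_deriv_neg (convex_Icc t cP)
      · exact fun s hs => ((gF_deriv (lt_of_lt_of_le ht hs.1)).continuousAt).continuousWithinAt
      · intro s hs
        rw [interior_Icc] at hs
        have hs0 : 0 < s := lt_trans ht hs.1
        rw [(gF_deriv hs0).deriv]
        have hneg : hF s < 0 := by
          have := hF_strictMono (Set.mem_Ici.mpr hs0.le) (Set.mem_Ici.mpr (lt_trans hs0 hs.2).le) hs.2
          rwa [hF_cP] at this
        exact div_neg_of_neg_of_pos (by linarith) (exp_sub_pos hs0)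
    have := this (Set.mem_Icc.mpr ⟨le_refl t, h.le⟩) (Set.mem_Icc.mpr ⟨h.le, le_refl cP⟩) h
    rw [hgcP] at this; linarith
  · rw [h, hgcP]
  · have : StrictMonoOn gF (Set.Icc cP t) := by
      apply strictMonoOn_of_deriv_pos (convex_Icc cP t)
      · exact fun s hs => ((gF_deriv (lt_of_lt_of_le cP_pos hs.1)).continuousAt).continuousWithinAt
      · intro s hs
        rw [interior_Icc] at hs
        have hs0 : 0 < s := lt_trans cP_pos hs.1
        have hpos : 0 < hF s := by
          have := hF_strictMono (Set.mem_Ici.mpr cP_pos.le) (Set.mem_Ici.mpr hs0.le) hs.1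
          rwa [hF_cP] at this
        rw [(gF_deriv hs0).deriv]
        exact div_pos (by linarith) (exp_sub_pos hs0)
    have := this (Set.mem_Icc.mpr ⟨le_refl cP, h.le⟩) (Set.mem_Icc.mpr ⟨h.le, le_refl t⟩) h
    rw [hgcP] at this; linarith

lemma key_ineq {t : ℝ} (ht : 0 < t) :
    Real.log (Real.exp t - Real.exp (-t)) ≤ kP * (t^2 - cP^2) := by
  have := gF_min ht
  rw [gF] at this
  linarith [this]

section NT
variable (L : Type*) [Field L] [NumberField L]

lemma emb_bij (htr : ∀ v : InfinitePlace L, v.IsReal) :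
    Function.Bijective (fun v : L →+* ℝ => (Complex.ofRealHom.comp v)) := by
  constructor
  · intro v w hvw
    ext x
    exact Complex.ofReal_injective (RingHom.congr_fun hvw x)
  · intro σ
    have h1 : ComplexEmbedding.IsReal σ := InfinitePlace.isReal_mk_iff.mp (htr _)
    exact ⟨h1.embedding, by ext x; exact h1.coe_embedding_apply x⟩

lemma prod_abs_eq_norm (x : L) :
    ∏ σ : L →+* ℂ, ‖σ x‖ = |((Algebra.norm ℚ x : ℚ) : ℝ)| := by
  have hh := congrArg (‖·‖) (Algebra.norm_eq_prod_embeddings ℚ (E := ℂ) x)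
  rw [norm_prod] at hh
  rw [Fintype.prod_equiv (RingHom.equivRatAlgHom L ℂ) (fun σ : L →+* ℂ => ‖σ x‖)
      (fun ψ : L →ₐ[ℚ] ℂ => ‖ψ x‖)
      (fun σ => by simp [RingHom.equivRatAlgHom_apply]),
    ← hh, eq_ratCast, ← Complex.ofReal_ratCast, Complex.norm_real, Real.norm_eq_abs]

end NT

theorem pohst_theorem (L : Type*) [Field L] [NumberField L]
    (htr : ∀ v : InfinitePlace L, v.IsReal)
    (u : (𝓞 L)ˣ) (hu1 : u ≠ 1) (hu2 : u ≠ -1) :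
    ∑ v : L →+* ℝ, Real.log |v ((u : 𝓞 L) : L)| ^ 2 ≥
      (Module.finrank ℚ L : ℝ) * Real.log ((1 + Real.sqrt 5) / 2) ^ 2 := by
  classical
  have hbij := emb_bij L htr
  have hcard : Fintype.card (L →+* ℝ) = Module.finrank ℚ L := by
    rw [Fintype.card_of_bijective hbij, NumberField.Embeddings.card L ℂ]
  set α : 𝓞 L := (u : 𝓞 L) - ((u⁻¹ : (𝓞 L)ˣ) : 𝓞 L) with hαdef
  have hα0 : α ≠ 0 := by
    intro h
    have h1 : (u : 𝓞 L) = ((u⁻¹ : (𝓞 L)ˣ) : 𝓞 L) := by rwa [hαdef, sub_eq_zero] at h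
    have h2 : (u : 𝓞 L) * (u : 𝓞 L) = 1 := by
      nth_rewrite 1 [h1]
      rw [← Units.val_mul, inv_mul_cancel, Units.val_one]
    have h3 : ((u : 𝓞 L) - 1) * ((u : 𝓞 L) + 1) = 0 := by ring_nf; linear_combination h2
    rcases mul_eq_zero.mp h3 with h4 | h4
    · exact hu1 (Units.ext (by rw [sub_eq_zero] at h4; simpa using h4))
    · refine hu2 (Units.ext ?_)
      rw [Units.val_neg, Units.val_one]
      exact eq_neg_of_add_eq_zero_left h4
  have hαL : (α : L) ≠ 0 := by
    simpa using hα0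
  -- norm bound
  have hN : (1:ℝ) ≤ |((Algebra.norm ℚ (α : L) : ℚ) : ℝ)| := by
    rw [← Algebra.coe_norm_int α]
    have : Algebra.norm ℤ α ≠ 0 := Algebra.norm_ne_zero_iff.mpr hα0
    have h1 : (1:ℤ) ≤ |Algebra.norm ℤ α| := Int.one_le_abs this
    push_cast
    exact_mod_cast h1
  have hprod : ∏ v : L →+* ℝ, |v (α : L)| = |((Algebra.norm ℚ (α : L) : ℚ) : ℝ)| := by
    rw [← prod_abs_eq_norm L (α : L)]
    exact Fintype.prod_bijective _ hbij _ _ (fun v => by simp)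
  have hsum0 : 0 ≤ ∑ v : L →+* ℝ, Real.log |v (α : L)| := by
    rw [← Real.log_prod (fun v _ => abs_ne_zero.mpr ((map_ne_zero v).mpr hαL))]
    rw [hprod]
    exact Real.log_nonneg hN
  -- per-place inequality
  have hkey : ∀ v : L →+* ℝ, cP^2 + (1/kP) * Real.log |v (α : L)| ≤
      Real.log |v ((u : 𝓞 L) : L)| ^ 2 := by
    intro v
    set x := v ((u : 𝓞 L) : L) with hxdef
    have hmulL : ((u : 𝓞 L) : L) * (((u⁻¹ : (𝓞 L)ˣ) : 𝓞 L) : L) = 1 := by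
      have : (u : 𝓞 L) * ((u⁻¹ : (𝓞 L)ˣ) : 𝓞 L) = 1 := by
        rw [← Units.val_mul, mul_inv_cancel, Units.val_one]
      calc ((u : 𝓞 L) : L) * (((u⁻¹ : (𝓞 L)ˣ) : 𝓞 L) : L)
          = (((u : 𝓞 L) * ((u⁻¹ : (𝓞 L)ˣ) : 𝓞 L) : 𝓞 L) : L) := by push_cast; ring
        _ = 1 := by rw [this]; simp
    have hmulx : x * v (((u⁻¹ : (𝓞 L)ˣ) : 𝓞 L) : L) = 1 := by
      rw [hxdef, ← map_mul, hmulL, map_one]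
    have hx0 : x ≠ 0 := left_ne_zero_of_mul_eq_one hmulx
    have hinv : v (((u⁻¹ : (𝓞 L)ˣ) : 𝓞 L) : L) = x⁻¹ := (inv_eq_of_mul_eq_one_right hmulx).symm
    have hinj := v.injective
    have habs1 : |x| ≠ 1 := by
      intro h
      rcases (abs_eq (by norm_num : (0:ℝ) ≤ 1)).mp h with h1 | h1
      · apply hu1
        apply Units.ext
        have hL : ((u : 𝓞 L) : L) = (1 : L) := hinj (by rw [map_one]; exact h1)
        have h2 : (u : 𝓞 L) = 1 := by exact_mod_cast hL
        simpa using h2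
      · apply hu2
        apply Units.ext
        have hL : ((u : 𝓞 L) : L) = (-1 : L) := hinj (by rw [map_neg, map_one]; exact h1)
        have h2 : (u : 𝓞 L) = -1 := by exact_mod_cast hL
        rw [Units.val_neg, Units.val_one]
        exact h2
    set s := Real.log |x| with hsdef
    have hs0 : s ≠ 0 := by
      intro h
      rcases Real.log_eq_zero.mp h with h1 | h1 | h1
      · exact hx0 (abs_eq_zero.mp h1)
      · exact habs1 h1
      · linarith [abs_nonneg x]
    have ht : 0 < |s| := abs_pos.mpr hs0
    have hva : v (α : L) = x - x⁻¹ := by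
      have : (α : L) = ((u : 𝓞 L) : L) - (((u⁻¹ : (𝓞 L)ˣ) : 𝓞 L) : L) := by
        rw [hαdef]; push_cast; ring
      rw [this, map_sub, hinv, hxdef]
    have hxval : |v (α : L)| = Real.exp |s| - Real.exp (-|s|) := by
      rw [hva]
      have h1 : |x - x⁻¹| = |(|x|) - (|x|)⁻¹| := by
        rcases hx0.lt_or_gt with hlt | hlt
        · rw [abs_of_neg hlt, inv_neg, show -x - -x⁻¹ = -(x - x⁻¹) by ring, abs_neg]
        · rw [abs_of_pos hlt]
      have hxabs : |x| = Real.exp s := (Real.exp_log (abs_pos.mpr hx0)).symm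
      rw [h1, hxabs, ← Real.exp_neg]
      rcases abs_cases s with ⟨he, hsn⟩ | ⟨he, hsn⟩
      · rw [he]
        exact abs_of_nonneg (sub_nonneg.mpr (Real.exp_le_exp.mpr (by linarith)))
      · rw [he, abs_sub_comm, neg_neg]
        exact abs_of_nonneg (sub_nonneg.mpr (Real.exp_le_exp.mpr (by linarith)))
    have hklog : Real.log |v (α : L)| ≤ kP * (|s|^2 - cP^2) := by
      rw [hxval]; exact key_ineq ht
    have hk := kP_pos
    have h2 : (1/kP) * Real.log |v (α : L)| ≤ |s|^2 - cP^2 := by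
      rw [div_mul_eq_mul_div, one_mul, div_le_iff₀ hk]
      calc Real.log |v (α : L)| ≤ kP * (|s|^2 - cP^2) := hklog
        _ = (|s|^2 - cP^2) * kP := by ring
    have h3 : |s|^2 = s^2 := sq_abs s
    calc cP^2 + (1/kP) * Real.log |v (α : L)| ≤ cP^2 + (|s|^2 - cP^2) := by linarith
      _ = s^2 := by rw [← h3]; ring
  -- assemble
  have hsum : ∑ v : L →+* ℝ, (cP^2 + (1/kP) * Real.log |v (α : L)|) ≤
      ∑ v : L →+* ℝ, Real.log |v ((u : 𝓞 L) : L)| ^ 2 :=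
    Finset.sum_le_sum (fun v _ => hkey v)
  rw [Finset.sum_add_distrib, Finset.sum_const, ← Finset.mul_sum, Finset.card_univ, hcard] at hsum
  have hk := kP_pos
  have : 0 ≤ (1/kP) * ∑ v : L →+* ℝ, Real.log |v (α : L)| :=
    mul_nonneg (by positivity) hsum0
  rw [ge_iff_le]
  calc (Module.finrank ℚ L : ℝ) * Real.log ((1 + Real.sqrt 5) / 2) ^ 2
      = (Module.finrank ℚ L : ℝ) * cP^2 := rfl
    _ ≤ (Module.finrank ℚ L) • cP^2 + (1/kP) * ∑ v : L →+* ℝ, Real.log |v (α : L)| := by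
        rw [nsmul_eq_mul]; linarith
    _ ≤ _ := hsum
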